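/- For every integer k ≥ 0, the sphere in ℝ³ defined by (4x - 1)² + (4y)² + (4z - √2)² = 17^k + 2 passes through exactly k + 1 points of ℤ³. -/

import Mathlib

open Zsqrtd

namespace Stmt10Aux
abbrev Gi := GaussianInt
def pa : Gi := ⟨4, 1⟩
def pb : Gi := ⟨4, -1⟩

lemma prime_of_norm_prime (z : Gi) (h : Prime z.norm) : Prime z := by
  rw [← UniqueFactorizationMonoid.irreducible_iff_prime]
  constructor
  · intro hu
    rw [← Zsqrtd.norm_eq_one_iff' (by norm_num) z] at hu
    exact h.ne_one hu
  · intro a b hab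
    have hn : z.norm = a.norm * b.norm := by rw [hab, Zsqrtd.norm_mul]
    rcases (h.irreducible.isUnit_or_isUnit hn) with h1 | h1
    · left
      rwa [Int.isUnit_iff_natAbs_eq, Zsqrtd.norm_eq_one_iff] at h1
    · right
      rwa [Int.isUnit_iff_natAbs_eq, Zsqrtd.norm_eq_one_iff] at h1

lemma norm_pa : pa.norm = 17 := by decide
lemma norm_pb : pb.norm = 17 := by decide
lemma prime_pa : Prime pa := prime_of_norm_prime _ (by rw [norm_pa]; norm_num)
lemma prime_pb : Prime pb := prime_of_norm_prime _ (by rw [norm_pb]; norm_num)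

lemma norm_dvd_norm {a b : Gi} (h : a ∣ b) : a.norm ∣ b.norm := by
  obtain ⟨c, rfl⟩ := h; rw [Zsqrtd.norm_mul]; exact dvd_mul_right _ _

lemma pa_not_dvd_pb : ¬ pa ∣ pb := by
  intro h
  have h2 : pa ∣ pa - pb := dvd_sub dvd_rfl h
  have h3 : pa.norm ∣ (pa - pb).norm := norm_dvd_norm h2
  rw [norm_pa] at h3
  have : (pa - pb).norm = 4 := by decide
  rw [this] at h3
  norm_num at h3

lemma mul_pa_pb : pa * pb = (17 : Gi) := by decide

lemma star_pa : star pa = pb := by decide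

lemma exists_assoc : ∀ (k : ℕ) (z : Gi), z.norm = 17 ^ k →
    ∃ j ≤ k, Associated (pa ^ j * pb ^ (k - j)) z := by
  intro k
  induction k with
  | zero =>
    intro z hz
    refine ⟨0, le_refl _, ?_⟩
    simp only [pow_zero, mul_one, Nat.zero_sub]
    exact (associated_one_iff_isUnit.mpr
      ((Zsqrtd.norm_eq_one_iff' (by norm_num) z).mp (by simpa using hz))).symm
  | succ k ih =>
    intro z hz
    have h17 : ((17 : ℤ) : Gi) ∣ z * star z := by
      rw [← Zsqrtd.norm_eq_mul_conj, hz]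
      push_cast
      exact dvd_pow_self _ (Nat.succ_ne_zero k)
    have hpa17 : pa ∣ ((17 : ℤ) : Gi) := by
      rw [show ((17:ℤ) : Gi) = (17 : Gi) by push_cast; ring, ← mul_pa_pb]
      exact dvd_mul_right _ _
    rcases prime_pa.2.2 z (star z) (hpa17.trans h17) with h | h
    · obtain ⟨w, rfl⟩ := h
      rw [Zsqrtd.norm_mul] at hz
      have hn : (17:ℤ) * w.norm = 17 ^ (k+1) := by
        rw [← hz, show pa.norm = 17 from by decide]
      have hw : w.norm = 17 ^ k :=
        mul_left_cancel₀ (by norm_num : (17:ℤ) ≠ 0) (by rw [hn, pow_succ'])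
      obtain ⟨j, hj, ha⟩ := ih w hw
      refine ⟨j + 1, by omega, ?_⟩
      have e : k + 1 - (j + 1) = k - j := by omega
      rw [e]
      have h2 := ha.mul_left pa
      have e2 : pa ^ (j+1) * pb ^ (k - j) = pa * (pa ^ j * pb ^ (k - j)) := by ring
      rw [e2]; exact h2
    · have h' : pb ∣ z := by
        obtain ⟨c, hc⟩ := h
        refine ⟨star c, ?_⟩
        rw [← star_star z, hc, star_mul, mul_comm, ← star_pa]
      obtain ⟨w, rfl⟩ := h'
      rw [Zsqrtd.norm_mul] at hz
      have hn : (17:ℤ) * w.norm = 17 ^ (k+1) := by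
        rw [← hz, show pb.norm = 17 from by decide]
      have hw : w.norm = 17 ^ k :=
        mul_left_cancel₀ (by norm_num : (17:ℤ) ≠ 0) (by rw [hn, pow_succ'])
      obtain ⟨j, hj, ha⟩ := ih w hw
      refine ⟨j, by omega, ?_⟩
      have e : k + 1 - j = (k - j) + 1 := by omega
      rw [e]
      have h2 := ha.mul_left pb
      have e2 : pa ^ j * pb ^ ((k - j) + 1) = pb * (pa ^ j * pb ^ (k - j)) := by ring
      rw [e2]; exact h2

lemma j_unique {k j j' : ℕ} (hj : j ≤ k) (hj' : j' ≤ k)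
    (h : Associated (pa ^ j * pb ^ (k - j)) (pa ^ j' * pb ^ (k - j'))) : j = j' := by
  by_contra hne
  wlog hlt : j < j' generalizing j j'
  · exact this hj' hj h.symm (Ne.symm hne) (by omega)
  obtain ⟨u, hu⟩ := h
  have e1 : pa ^ j * (pb ^ (k - j) * (u : Gi)) = pa ^ j * (pa ^ (j' - j) * pb ^ (k - j')) := by
    calc pa ^ j * (pb ^ (k - j) * (u : Gi)) = pa ^ j * pb ^ (k - j) * u := by ring
      _ = pa ^ j' * pb ^ (k - j') := hu
      _ = pa ^ j * (pa ^ (j' - j) * pb ^ (k - j')) := by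
          have hp : pa ^ j * pa ^ (j' - j) = pa ^ j' := by
            rw [← pow_add]; congr 1; omega
          rw [← hp]; ring
  have e2 := mul_left_cancel₀ (pow_ne_zero j prime_pa.ne_zero) e1
  have hdvd : pa ∣ pb ^ (k - j) * (u : Gi) := by
    rw [e2]
    exact dvd_mul_of_dvd_left (dvd_pow_self pa (by omega : j' - j ≠ 0)) _
  rcases prime_pa.2.2 _ _ hdvd with hd | hd
  · exact pa_not_dvd_pb (prime_pa.dvd_of_dvd_pow hd)
  · exact prime_pa.not_unit (isUnit_of_dvd_unit hd u.isUnit)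

lemma unit_cases {u : Gi} (h : IsUnit u) :
    u = 1 ∨ u = -1 ∨ u = ⟨0, 1⟩ ∨ u = ⟨0, -1⟩ := by
  rw [← Zsqrtd.norm_eq_one_iff' (by norm_num) u] at h
  obtain ⟨a, b⟩ := u
  rw [Zsqrtd.norm_def] at h
  simp only at h
  have h' : a * a + b * b = 1 := by linarith
  have ha1 : -1 ≤ a := by nlinarith [sq_nonneg (a + 1), mul_self_nonneg b]
  have ha2 : a ≤ 1 := by nlinarith [sq_nonneg (a - 1), mul_self_nonneg b]
  have hb1 : -1 ≤ b := by nlinarith [sq_nonneg (b + 1), mul_self_nonneg a]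
  have hb2 : b ≤ 1 := by nlinarith [sq_nonneg (b - 1), mul_self_nonneg a]
  interval_cases a <;> interval_cases b <;> revert h' <;> decide

lemma assoc_eq {z w : Gi} (hz1 : z.re % 4 = 3) (hz2 : z.im % 4 = 0)
    (hw1 : w.re % 4 = 3) (hw2 : w.im % 4 = 0) (h : Associated z w) : z = w := by
  obtain ⟨u, hu⟩ := h
  rcases unit_cases u.isUnit with h1 | h1 | h1 | h1 <;> rw [h1] at hu
  · rw [← hu, mul_one]
  · rw [← hu] at hw1
    simp only [Zsqrtd.re_mul, Zsqrtd.im_mul] at hw1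
    simp only [show ((-1 : Gi)).re = -1 from rfl, show ((-1 : Gi)).im = 0 from rfl] at hw1
    omega
  · rw [← hu] at hw1
    have : (z * (⟨0,1⟩ : Gi)).re = - z.im := by
      simp [Zsqrtd.re_mul]
    rw [this] at hw1
    omega
  · rw [← hu] at hw1
    have : (z * (⟨0,-1⟩ : Gi)).re = z.im := by
      simp [Zsqrtd.re_mul]
    rw [this] at hw1
    omega

lemma sq_mod8 (a : ℤ) : a * a % 8 = 0 ∨ a * a % 8 = 1 ∨ a * a % 8 = 4 := by
  obtain ⟨q, r, hr0, hr4, rfl⟩ : ∃ q r, 0 ≤ r ∧ r < 4 ∧ a = 4 * q + r :=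
    ⟨a / 4, a % 4, Int.emod_nonneg a (by norm_num), Int.emod_lt_of_pos a (by norm_num),
      (Int.mul_ediv_add_emod a 4).symm⟩
  have e : (4 * q + r) * (4 * q + r) = 8 * (2 * q * q + q * r) + r * r := by ring
  rw [e]
  interval_cases r <;> omega

lemma odd_sq_mod8 {a : ℤ} (h : a % 2 = 1) : a * a % 8 = 1 := by
  obtain ⟨q, r, hr0, hr4, rfl⟩ : ∃ q r, 0 ≤ r ∧ r < 4 ∧ a = 4 * q + r :=
    ⟨a / 4, a % 4, Int.emod_nonneg a (by norm_num), Int.emod_lt_of_pos a (by norm_num),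
      (Int.mul_ediv_add_emod a 4).symm⟩
  have e : (4 * q + r) * (4 * q + r) = 8 * (2 * q * q + q * r) + r * r := by ring
  rw [e]
  interval_cases r <;> omega

lemma even_sq_mod8 {a : ℤ} (h : a % 2 = 0) : a * a % 8 = 0 ∨ a * a % 8 = 4 := by
  obtain ⟨c, rfl⟩ : ∃ c, a = 2 * c := ⟨a / 2, by omega⟩
  have e : 2 * c * (2 * c) = 4 * (c * c) := by ring
  rcases Int.emod_two_eq c with hc | hc
  · obtain ⟨d, rfl⟩ : ∃ d, c = 2 * d := ⟨c / 2, by omega⟩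
    have e2 : 2 * (2 * d) * (2 * (2 * d)) = 8 * (2 * (d * d)) := by ring
    rw [e2]; omega
  · have := odd_sq_mod8 hc
    rw [e]; generalize c * c = t at *; omega

lemma sq8_even {a : ℤ} (h2 : a % 2 = 0) (h8 : a * a % 8 = 0) : a % 4 = 0 := by
  obtain ⟨c, rfl⟩ : ∃ c, a = 2 * c := ⟨a / 2, by omega⟩
  rcases Int.emod_two_eq c with hc | hc
  · omega
  · have := odd_sq_mod8 hc
    have e : 2 * c * (2 * c) = 4 * (c * c) := by ring
    rw [e] at h8; generalize c * c = t at *; omega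

lemma parity_split {a b : ℤ} (h : (a * a + b * b) % 8 = 1) :
    (a % 2 = 1 ∧ b % 4 = 0) ∨ (b % 2 = 1 ∧ a % 4 = 0) := by
  rcases Int.emod_two_eq a with ha | ha <;> rcases Int.emod_two_eq b with hb | hb
  · rcases even_sq_mod8 ha with h1 | h1 <;> rcases even_sq_mod8 hb with h2 | h2 <;>
      (generalize a * a = s at *; generalize b * b = t at *; omega)
  · refine Or.inr ⟨hb, ?_⟩
    have h1 := odd_sq_mod8 hb
    rcases even_sq_mod8 ha with h2 | h2
    · exact sq8_even ha h2
    · exfalso; generalize a * a = s at *; generalize b * b = t at *; omega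
  · refine Or.inl ⟨ha, ?_⟩
    have h1 := odd_sq_mod8 ha
    rcases even_sq_mod8 hb with h2 | h2
    · exact sq8_even hb h2
    · exfalso; generalize a * a = s at *; generalize b * b = t at *; omega
  · have h1 := odd_sq_mod8 ha
    have h2 := odd_sq_mod8 hb
    generalize a * a = s at *; generalize b * b = t at *; omega

lemma norm_re_im (z : Gi) : z.norm = z.re * z.re + z.im * z.im := by
  rw [Zsqrtd.norm_def]; ring

lemma norm_assoc {z w : Gi} (h : Associated z w) : z.norm = w.norm := by
  obtain ⟨u, rfl⟩ := h
  rw [Zsqrtd.norm_mul, (Zsqrtd.norm_eq_one_iff' (by norm_num) _).mpr u.isUnit, mul_one]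

lemma normalize (z : Gi) (h : z.norm % 8 = 1) :
    ∃ w : Gi, Associated z w ∧ w.re % 4 = 3 ∧ w.im % 4 = 0 := by
  have hn : (z.re * z.re + z.im * z.im) % 8 = 1 := by rw [← norm_re_im]; exact h
  have hu1 : IsUnit ((⟨0, 1⟩ : Gi)) := IsUnit.of_mul_eq_one ⟨0, -1⟩ (by decide)
  have hu2 : IsUnit ((⟨0, -1⟩ : Gi)) := IsUnit.of_mul_eq_one ⟨0, 1⟩ (by decide)
  rcases parity_split hn with ⟨h1, h2⟩ | ⟨h1, h2⟩
  · rcases (by omega : z.re % 4 = 1 ∨ z.re % 4 = 3) with h3 | h3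
    · refine ⟨-z, ⟨-1, by simp⟩, ?_, ?_⟩ <;> simp only [Zsqrtd.re_neg, Zsqrtd.im_neg] <;> omega
    · exact ⟨z, Associated.refl z, h3, h2⟩
  · rcases (by omega : z.im % 4 = 1 ∨ z.im % 4 = 3) with h3 | h3
    · refine ⟨z * ⟨0, 1⟩, ⟨hu1.unit, by rw [IsUnit.unit_spec]⟩, ?_, ?_⟩ <;>
        simp only [Zsqrtd.re_mul, Zsqrtd.im_mul] <;> simp <;> omega
    · refine ⟨z * ⟨0, -1⟩, ⟨hu2.unit, by rw [IsUnit.unit_spec]⟩, ?_, ?_⟩ <;>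
        simp only [Zsqrtd.re_mul, Zsqrtd.im_mul] <;> simp <;> omega

lemma norm_pow (t : Gi) (n : ℕ) : (t ^ n).norm = t.norm ^ n := by
  induction n with
  | zero => simp [Zsqrtd.norm_one]
  | succ n ih => rw [pow_succ, pow_succ, Zsqrtd.norm_mul, ih]

end Stmt10Aux

open Stmt10Aux in
/-- For every `k ≥ 0`, the sphere `(4x-1)² + (4y)² + (4z-√2)² = 17^k + 2` in `ℝ³`
passes through exactly `k + 1` points of `ℤ³`. -/
theorem stmt_10 (k : ℕ) :
    Set.ncard {p : ℤ × ℤ × ℤ |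
      (4 * (p.1 : ℝ) - 1) ^ 2 + (4 * (p.2.1 : ℝ)) ^ 2 +
        (4 * (p.2.2 : ℝ) - Real.sqrt 2) ^ 2 = 17 ^ k + 2} = k + 1 := by
  have hs : Real.sqrt 2 ^ 2 = 2 := Real.sq_sqrt (by norm_num)
  have hex : ∀ j : ℕ, ∃ w : Gi, Associated (pa ^ j * pb ^ (k - j)) w ∧
      w.re % 4 = 3 ∧ w.im % 4 = 0 := by
    intro j
    apply Stmt10Aux.normalize
    rw [Zsqrtd.norm_mul, Stmt10Aux.norm_pow, Stmt10Aux.norm_pow, norm_pa, norm_pb, ← pow_add]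
    have : (17:ℤ) ^ (j + (k - j)) % 8 = 1 := by
      induction (j + (k-j)) with
      | zero => norm_num
      | succ n ih => rw [pow_succ]; omega
    exact this
  choose w hw1 hw2 hw3 using hex
  have hwnorm : ∀ j, j ≤ k → (w j).norm = 17 ^ k := by
    intro j hj
    rw [← norm_assoc (hw1 j), Zsqrtd.norm_mul, Stmt10Aux.norm_pow, Stmt10Aux.norm_pow, norm_pa, norm_pb,
      ← pow_add]
    congr 1
    omega
  set f : ℕ → ℤ × ℤ × ℤ := fun j => (((w j).re + 1) / 4, (w j).im / 4, 0) with hf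
  have hset : {p : ℤ × ℤ × ℤ |
      (4 * (p.1 : ℝ) - 1) ^ 2 + (4 * (p.2.1 : ℝ)) ^ 2 +
        (4 * (p.2.2 : ℝ) - Real.sqrt 2) ^ 2 = 17 ^ k + 2} = f '' Set.Iic k := by
    ext ⟨x, y, z⟩
    simp only [Set.mem_setOf_eq, Set.mem_image, Set.mem_Iic]
    constructor
    · intro h
      have hcross : (8 * (z:ℝ)) * Real.sqrt 2 =
          (4*(x:ℝ)-1)^2 + (4*(y:ℝ))^2 + 16*(z:ℝ)^2 - 17^k := by
        linear_combination -h + hs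
      have hz0 : z = 0 := by
        by_contra hz
        apply irrational_sqrt_two
        refine ⟨((4*(x:ℚ)-1)^2 + (4*(y:ℚ))^2 + 16*(z:ℚ)^2 - 17^k) / (8*(z:ℚ)), ?_⟩
        have hz8 : (8 * (z:ℝ)) ≠ 0 := by
          exact mul_ne_zero (by norm_num) (Int.cast_ne_zero.mpr hz)
        have h2 : Real.sqrt 2 =
            ((4*(x:ℝ)-1)^2 + (4*(y:ℝ))^2 + 16*(z:ℝ)^2 - 17^k) / (8*(z:ℝ)) := by
          rw [← hcross, mul_comm, mul_div_assoc, div_self hz8, mul_one]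
        rw [h2]
        push_cast
        ring
      subst hz0
      have hint : (4*x-1)^2 + (4*y)^2 = 17 ^ k := by
        have hre : ((4*(x:ℝ)-1)^2 + (4*(y:ℝ))^2 : ℝ) = 17 ^ k := by
          push_cast at h ⊢
          linear_combination h - hs
        exact_mod_cast hre
      set zg : Gi := ⟨4*x-1, 4*y⟩ with hzg
      have hzgn : zg.norm = 17 ^ k := by
        rw [norm_re_im]
        simp only [hzg]
        nlinarith [hint]
      obtain ⟨j, hj, ha⟩ := exists_assoc k zg hzgn
      have heq : zg = w j :=
        assoc_eq (by simp only [hzg]; omega) (by simp only [hzg]; omega)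
          (hw2 j) (hw3 j) (ha.symm.trans (hw1 j))
      refine ⟨j, hj, ?_⟩
      have h1 : (w j).re = 4*x-1 := by rw [← heq]
      have h2 : (w j).im = 4*y := by rw [← heq]
      simp only [hf, Prod.mk.injEq]
      exact ⟨by omega, by omega, trivial⟩
    · rintro ⟨j, hj, hfj⟩
      have h1 : ((w j).re + 1) / 4 = x ∧ (w j).im / 4 = y ∧ (0:ℤ) = z := by
        simpa [hf, Prod.ext_iff] using hfj
      obtain ⟨hx, hy, hz⟩ := h1
      have hre : 4 * x - 1 = (w j).re := by have := hw2 j; omega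
      have him : 4 * y = (w j).im := by have := hw3 j; omega
      have hn := hwnorm j hj
      rw [norm_re_im] at hn
      have hint : (4*x-1)^2 + (4*y)^2 = 17 ^ k := by
        rw [hre, him]; nlinarith [hn]
      rw [← hz]
      have : ((4*(x:ℝ)-1)^2 + (4*(y:ℝ))^2 : ℝ) = 17 ^ k := by exact_mod_cast hint
      push_cast
      linear_combination this + hs
  rw [hset]
  have hinj : Set.InjOn f (Set.Iic k) := by
    intro j hj j' hj' hjj
    simp only [hf, Prod.mk.injEq] at hjj
    obtain ⟨e1, e2, _⟩ := hjj
    have hre : (w j).re = (w j').re := by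
      have := hw2 j; have := hw2 j'; omega
    have him : (w j).im = (w j').im := by
      have := hw3 j; have := hw3 j'; omega
    have hww : w j = w j' := by
      cases' hww : w j with a b
      cases' hww' : w j' with a' b'
      simp_all
    exact j_unique hj hj' ((hw1 j).trans (hww ▸ (hw1 j').symm))
  rw [Set.ncard_image_of_injOn hinj, ← Finset.coe_Iic, Set.ncard_coe_finset,
    Nat.card_Iic]
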